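/- arXiv:2109.09048 — 3 statements merged into one kernel-verified Lean document; each statement's English description precedes it below -/
import Mathlib

section
/- Let p, N be positive integers, let A be a real p×N matrix such that A Aᵀ is invertible, and set V = (A Aᵀ)⁻¹. Let σ > 0 and let g ∈ ℝᵖ. Let T : ℝᴺ → ℝ be an estimator of gᵀγ that is square-integrable with respect to the Gaussian measure N(Aᵀγ, σ²I_N) on ℝᴺ for every γ ∈ ℝᵖ, and let u : ℝᴺ → ℝ be a non-negative function. Then at least one of the following two statements is true: (1) T is biased, i.e., there exists γ ∈ ℝᵖ such that the expectation of T under y ∼ N(Aᵀγ, σ²I_N) differs from gᵀγ; (2) for every γ ∈ ℝᵖ and every y' ∈ ℝᴺ with u(y')² < σ² gᵀ V g, one also has u(y')² < E_{y ∼ N(Aᵀγ, σ²I_N)}[(T(y) − gᵀγ)²], i.e., u(y') is smaller than the root mean squared error of T under repeated sampling. -/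
open MeasureTheory Matrix Real

noncomputable def gaussianPi (N : ℕ) (μ : Fin N → ℝ) (σ : ℝ) : Measure (Fin N → ℝ) :=
  volume.withDensity (fun y => ENNReal.ofReal
    ((2 * Real.pi * σ ^ 2) ^ (-(N : ℝ) / 2) *
      Real.exp (- (∑ i, (y i - μ i) ^ 2) / (2 * σ ^ 2))))

open scoped ENNReal NNReal

noncomputable def gphi (N : ℕ) (σ : ℝ) (m : Fin N → ℝ) (y : Fin N → ℝ) : ℝ :=
  (2 * Real.pi * σ ^ 2) ^ (-(N : ℝ) / 2) * Real.exp (-(∑ i, (y i - m i) ^ 2) / (2 * σ ^ 2))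

noncomputable def g1 (σ : ℝ) (x : ℝ) : ℝ :=
  (2 * Real.pi * σ ^ 2) ^ (-(1 : ℝ) / 2) * Real.exp (-x ^ 2 / (2 * σ ^ 2))

lemma two_pi_sq_pos {σ : ℝ} (hσ : 0 < σ) : 0 < 2 * Real.pi * σ ^ 2 := by positivity

lemma gphi_pos {N σ m y} (hσ : 0 < σ) : 0 < gphi N σ m y := by
  unfold gphi
  have := two_pi_sq_pos hσ
  positivity

lemma gphi_eq_prod {N σ} (hσ : 0 < σ) (m y : Fin N → ℝ) :
    gphi N σ m y = ∏ i, g1 σ (y i - m i) := by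
  unfold gphi g1
  rw [Finset.prod_mul_distrib, Finset.prod_const, ← Real.exp_sum]
  congr 1
  · rw [← Real.rpow_natCast ((2 * Real.pi * σ ^ 2) ^ (-(1:ℝ)/2)) _,
      ← Real.rpow_mul (two_pi_sq_pos hσ).le]
    norm_num
    ring_nf
  · congr 1
    rw [neg_div, Finset.sum_div, ← Finset.sum_neg_distrib]
    exact Finset.sum_congr rfl fun i _ => by ring

lemma g1_integrable {σ : ℝ} (hσ : 0 < σ) : Integrable (g1 σ) := by
  have h : Integrable (fun x : ℝ => Real.exp (-(1/(2*σ^2)) * x ^ 2)) :=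
    integrable_exp_neg_mul_sq (by positivity)
  have : (g1 σ) = fun x => (2 * Real.pi * σ ^ 2) ^ (-(1:ℝ)/2) * Real.exp (-(1/(2*σ^2)) * x ^ 2) := by
    funext x; unfold g1; ring_nf
  rw [this]
  exact h.const_mul _

lemma g1_integral {σ : ℝ} (hσ : 0 < σ) : ∫ x, g1 σ x = 1 := by
  have h : ∫ x, Real.exp (-(1/(2*σ^2)) * x ^ 2) = Real.sqrt (Real.pi / (1/(2*σ^2))) :=
    integral_gaussian _
  unfold g1
  have heq : ∀ x : ℝ, Real.exp (-x ^ 2 / (2*σ^2)) = Real.exp (-(1/(2*σ^2)) * x ^ 2) := by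
    intro x; congr 1; field_simp
  simp_rw [heq]
  rw [integral_const_mul, h]
  have h2 : Real.pi / (1/(2*σ^2)) = 2 * Real.pi * σ ^ 2 := by field_simp
  rw [h2, Real.sqrt_eq_rpow, ← Real.rpow_add (two_pi_sq_pos hσ)]
  norm_num

lemma gphi_integrable {N σ} (hσ : 0 < σ) (m : Fin N → ℝ) :
    Integrable (gphi N σ m) := by
  have h : Integrable (fun y : Fin N → ℝ => ∏ i, g1 σ (y i - m i)) :=
    Integrable.fintype_prod_dep (f := fun i x => g1 σ (x - m i))
      (fun i => (g1_integrable hσ).comp_sub_right (m i))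
  exact h.congr (Filter.Eventually.of_forall fun y => (gphi_eq_prod hσ m y).symm)

lemma gphi_integral {N σ} (hσ : 0 < σ) (m : Fin N → ℝ) :
    ∫ y, gphi N σ m y = 1 := by
  simp_rw [gphi_eq_prod hσ m]
  rw [MeasureTheory.integral_fintype_prod_volume_eq_prod (f := fun i (x : ℝ) => g1 σ (x - m i))]
  have : ∀ i : Fin N, ∫ x : ℝ, g1 σ (x - m i) = 1 := by
    intro i; rw [integral_sub_right_eq_self]; exact g1_integral hσ
  simp [this]

lemma gphi_measurable {N σ} (m : Fin N → ℝ) : Measurable (gphi N σ m) := by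
  unfold gphi
  exact (measurable_const.mul ((((Finset.measurable_sum _ fun i _ =>
    ((measurable_pi_apply i).sub measurable_const).pow_const 2).neg).div_const _).exp))

lemma gaussianPi_eq (N : ℕ) (m : Fin N → ℝ) (σ : ℝ) :
    gaussianPi N m σ = volume.withDensity (fun y => ENNReal.ofReal (gphi N σ m y)) := rfl

lemma integral_gaussianPi {N : ℕ} {σ : ℝ} (hσ : 0 < σ) (m : Fin N → ℝ)
    (h : (Fin N → ℝ) → ℝ) :
    ∫ y, h y ∂(gaussianPi N m σ) = ∫ y, gphi N σ m y * h y := by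
  rw [gaussianPi_eq]
  have hm : Measurable (fun y => (gphi N σ m y).toNNReal) :=
    (gphi_measurable m).real_toNNReal
  have : (fun y => ENNReal.ofReal (gphi N σ m y))
      = fun y => ((gphi N σ m y).toNNReal : ℝ≥0∞) := rfl
  rw [this, integral_withDensity_eq_integral_smul hm]
  congr 1; funext y
  simp [NNReal.smul_def, Real.coe_toNNReal _ (gphi_pos (m := m) (y := y) hσ).le]

lemma integrable_gaussianPi_iff {N : ℕ} {σ : ℝ} (hσ : 0 < σ) (m : Fin N → ℝ)
    (h : (Fin N → ℝ) → ℝ) :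
    Integrable h (gaussianPi N m σ) ↔ Integrable (fun y => gphi N σ m y * h y) := by
  rw [gaussianPi_eq]
  have hm : Measurable (fun y => (gphi N σ m y).toNNReal) :=
    (gphi_measurable m).real_toNNReal
  have h1 : (fun y => ENNReal.ofReal (gphi N σ m y))
      = fun y => ((gphi N σ m y).toNNReal : ℝ≥0∞) := rfl
  rw [h1, integrable_withDensity_iff_integrable_smul hm]
  constructor <;> intro hi <;> refine hi.congr (Filter.Eventually.of_forall fun y => ?_) <;>
    simp [NNReal.smul_def, Real.coe_toNNReal _ (gphi_pos (m := m) (y := y) hσ).le]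

instance isProb_gaussianPi {N : ℕ} {m : Fin N → ℝ} {σ : ℝ} [Fact (0 < σ)] :
    IsProbabilityMeasure (gaussianPi N m σ) := by
  have hσ : 0 < σ := Fact.out
  constructor
  rw [gaussianPi_eq, withDensity_apply _ MeasurableSet.univ, Measure.restrict_univ]
  rw [← ofReal_integral_eq_lintegral_ofReal (gphi_integrable hσ m)
    (Filter.Eventually.of_forall fun y => (gphi_pos hσ).le)]
  rw [gphi_integral hσ m]; norm_num

lemma gphi_shift {N : ℕ} {σ : ℝ} (hσ : 0 < σ) (m v y : Fin N → ℝ) :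
    gphi N σ (m + v) y =
      gphi N σ m y * Real.exp ((v ⬝ᵥ (y - m)) / σ ^ 2 - (v ⬝ᵥ v) / (2 * σ ^ 2)) := by
  unfold gphi
  have hr : ∀ c a b : ℝ, c * Real.exp a * Real.exp b = c * Real.exp (a + b) := fun c a b => by
    rw [mul_assoc, ← Real.exp_add]
  rw [hr]
  congr 2
  have hsum : ∑ i, (y i - (m + v) i) ^ 2
      = ∑ i, (y i - m i) ^ 2 - 2 * (v ⬝ᵥ (y - m)) + v ⬝ᵥ v := by
    simp only [dotProduct, Pi.add_apply, Pi.sub_apply, Finset.mul_sum]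
    rw [← Finset.sum_sub_distrib, ← Finset.sum_add_distrib]
    exact Finset.sum_congr rfl fun i _ => by ring
  rw [hsum]
  have hσ2 : σ ^ 2 ≠ 0 := by positivity
  field_simp
  ring

set_option maxHeartbeats 1000000 in
lemma crb {N : ℕ} {σ : ℝ} (hσ : 0 < σ) [Fact (0 < σ)] (m w : Fin N → ℝ) (β a : ℝ)
    (hww : w ⬝ᵥ w = β) (hβpos : 0 < β) (T : (Fin N → ℝ) → ℝ)
    (hmean : ∀ s : ℝ, ∫ y, T y ∂(gaussianPi N (m + s • w) σ) = a + s * β)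
    (hL2 : ∀ s : ℝ, MemLp T 2 (gaussianPi N (m + s • w) σ))
    (t : ℝ) (ht : 0 < t) :
    σ ^ 2 * β ≤ (∫ y, (T y - a) ^ 2 ∂(gaussianPi N m σ)) * Real.exp (t ^ 2 * β / σ ^ 2) := by
  have hm0 : m + (0:ℝ) • w = m := by simp
  have hμ0 : gaussianPi N (m + (0:ℝ) • w) σ = gaussianPi N m σ := by rw [hm0]
  set μ : Measure (Fin N → ℝ) := gaussianPi N m σ with hμdef
  haveI : IsProbabilityMeasure μ := isProb_gaussianPi
  set VT : ℝ := ∫ y, (T y - a) ^ 2 ∂μ with hVT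
  have hVT0 : 0 ≤ VT := integral_nonneg fun y => sq_nonneg _
  have hTμ : MemLp T 2 μ := by rw [← hμ0]; exact hL2 0
  have iX2 : Integrable (fun y => (T y - a) ^ 2) μ :=
    (hTμ.sub (memLp_const a)).integrable_sq
  have iT : Integrable T μ := hTμ.integrable one_le_two
  have I4 : ∫ y, T y ∂μ = a := by
    have := hmean 0
    rw [hμ0] at this
    simpa using this
  set c : ℝ := Real.exp (t ^ 2 * β / σ ^ 2) with hc
  have hspos : 0 < t ^ 2 * β / σ ^ 2 := by positivity
  have hcpos : 0 < c := Real.exp_pos _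
  have hc1 : 1 < c := by
    rw [hc]
    calc (1:ℝ) = Real.exp 0 := by simp
      _ < _ := Real.exp_lt_exp.2 hspos
  set ρ : (Fin N → ℝ) → ℝ :=
    fun y => Real.exp (t * (w ⬝ᵥ (y - m)) / σ ^ 2 - t ^ 2 * β / (2 * σ ^ 2)) with hρ
  have hFρ : ∀ y, gphi N σ m y * ρ y = gphi N σ (m + t • w) y := by
    intro y
    simp only [hρ]
    rw [gphi_shift hσ m (t • w) y]
    congr 2
    rw [smul_dotProduct, smul_dotProduct, dotProduct_smul, hww, smul_eq_mul, smul_eq_mul,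
      smul_eq_mul]
    ring
  have hFρ2 : ∀ y, gphi N σ m y * ρ y ^ 2 = gphi N σ (m + (2 * t) • w) y * c := by
    intro y
    simp only [hρ, hc]
    rw [gphi_shift hσ m ((2 * t) • w) y, pow_two, ← Real.exp_add, mul_assoc,
      ← Real.exp_add]
    congr 2
    rw [smul_dotProduct, smul_dotProduct, dotProduct_smul, hww, smul_eq_mul, smul_eq_mul,
      smul_eq_mul]
    ring
  have I1 : ∫ y, ρ y ∂μ = 1 := by
    rw [hμdef, integral_gaussianPi hσ]
    simp_rw [hFρ]
    exact gphi_integral hσ _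
  have I2 : ∫ y, ρ y ^ 2 ∂μ = c := by
    rw [hμdef, integral_gaussianPi hσ]
    simp_rw [hFρ2]
    rw [integral_mul_const, gphi_integral hσ _, one_mul]
  have I3 : ∫ y, ρ y * T y ∂μ = a + t * β := by
    have hub := hmean t
    rw [integral_gaussianPi hσ] at hub
    rw [hμdef, integral_gaussianPi hσ]
    have h0 : (fun y => gphi N σ m y * (ρ y * T y))
        = fun y => gphi N σ (m + t • w) y * T y := by
      funext y; rw [← mul_assoc, hFρ]
    rw [h0, hub]
  have iρ : Integrable ρ μ := by
    rw [hμdef, integrable_gaussianPi_iff hσ]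
    exact (gphi_integrable hσ (m + t • w)).congr
      (Filter.Eventually.of_forall fun y => (hFρ y).symm)
  have iρ2 : Integrable (fun y => ρ y ^ 2) μ := by
    rw [hμdef, integrable_gaussianPi_iff hσ]
    exact ((gphi_integrable hσ (m + (2 * t) • w)).mul_const c).congr
      (Filter.Eventually.of_forall fun y => (hFρ2 y).symm)
  have iTρ : Integrable (fun y => ρ y * T y) μ := by
    have h1 := (hL2 t).integrable one_le_two
    rw [integrable_gaussianPi_iff hσ] at h1
    rw [hμdef, integrable_gaussianPi_iff hσ]
    exact h1.congr (Filter.Eventually.of_forall fun y => by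
      show gphi N σ (m + t • w) y * T y = gphi N σ m y * (ρ y * T y)
      rw [← mul_assoc, hFρ])
  set l : ℝ := t * β / (c - 1) with hl
  have hcc : (0:ℝ) < c - 1 := by linarith
  set Z : (Fin N → ℝ) → ℝ := fun y => ρ y - 1 with hZ
  have iXZ : Integrable (fun y => (T y - a) * Z y) μ := by
    have h0 : (fun y => (T y - a) * Z y)
        = fun y => (ρ y * T y - T y) - (a * ρ y - a) := by
      funext y; simp only [hZ]; ring
    rw [h0]
    exact (iTρ.sub iT).sub ((iρ.const_mul a).sub (integrable_const a))
  have iZ2 : Integrable (fun y => Z y ^ 2) μ := by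
    have h0 : (fun y => Z y ^ 2) = fun y => (ρ y ^ 2 - 2 * ρ y) + 1 := by
      funext y; simp only [hZ]; ring
    rw [h0]
    exact (iρ2.sub (iρ.const_mul 2)).add (integrable_const 1)
  have hXZ : ∫ y, (T y - a) * Z y ∂μ = t * β := by
    have h0 : (fun y => (T y - a) * Z y)
        = fun y => (ρ y * T y - T y) - (a * ρ y - a) := by
      funext y; simp only [hZ]; ring
    have if1 : Integrable (fun y => ρ y * T y - T y) μ := iTρ.sub iT
    have if2 : Integrable (fun y => a * ρ y - a) μ := (iρ.const_mul a).sub (integrable_const a)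
    rw [h0, integral_sub if1 if2, integral_sub iTρ iT,
      integral_sub (iρ.const_mul a) (integrable_const a),
      integral_const_mul, I1, I3, I4, integral_const]
    simp
  have hZ2' : ∫ y, Z y ^ 2 ∂μ = c - 1 := by
    have h0 : (fun y => Z y ^ 2) = fun y => (ρ y ^ 2 - 2 * ρ y) + 1 := by
      funext y; simp only [hZ]; ring
    have if3 : Integrable (fun y => ρ y ^ 2 - 2 * ρ y) μ := iρ2.sub (iρ.const_mul 2)
    rw [h0, integral_add if3 (integrable_const 1),
      integral_sub iρ2 (iρ.const_mul 2), integral_const_mul, I1, I2, integral_const]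
    simp
    ring
  have hQ : 0 ≤ VT - 2 * l * (t * β) + l ^ 2 * (c - 1) := by
    have h0 : (0:ℝ) ≤ ∫ y, (T y - a - l * Z y) ^ 2 ∂μ :=
      integral_nonneg fun y => sq_nonneg _
    have h1 : (fun y => (T y - a - l * Z y) ^ 2)
        = fun y => ((T y - a) ^ 2 - (2 * l) * ((T y - a) * Z y)) + l ^ 2 * Z y ^ 2 := by
      funext y; ring
    have ig1 : Integrable (fun y => (T y - a) ^ 2 - (2 * l) * ((T y - a) * Z y)) μ :=
      iX2.sub (iXZ.const_mul (2 * l))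
    have ig2 : Integrable (fun y => l ^ 2 * Z y ^ 2) μ := iZ2.const_mul (l ^ 2)
    rw [h1, integral_add ig1 ig2, integral_sub iX2 (iXZ.const_mul (2 * l)),
      integral_const_mul, integral_const_mul, hXZ, hZ2', ← hVT] at h0
    linarith
  have hQ2 : t ^ 2 * β ^ 2 ≤ VT * (c - 1) := by
    have hl1 : l * (c - 1) = t * β := by rw [hl]; field_simp
    have h3 : 0 ≤ (VT - 2 * l * (t * β) + l ^ 2 * (c - 1)) * (c - 1) :=
      mul_nonneg hQ hcc.le
    nlinarith [h3, hl1, sq_nonneg (l * (c - 1) - t * β)]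
  have hce2 : c - 1 ≤ (t ^ 2 * β / σ ^ 2) * c := by
    have e1 := Real.add_one_le_exp (-(t ^ 2 * β / σ ^ 2))
    have e2 : Real.exp (-(t ^ 2 * β / σ ^ 2)) = c⁻¹ := by rw [Real.exp_neg, hc]
    have e3 : (1 - t ^ 2 * β / σ ^ 2) * c ≤ 1 := by
      have h4 : (1 - t ^ 2 * β / σ ^ 2) ≤ c⁻¹ := by rw [← e2]; linarith [e1]
      have := mul_le_mul_of_nonneg_right h4 hcpos.le
      rwa [inv_mul_cancel₀ (ne_of_gt hcpos)] at this
    nlinarith [e3]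
  have h7 : t ^ 2 * β ^ 2 ≤ VT * ((t ^ 2 * β / σ ^ 2) * c) :=
    le_trans hQ2 (mul_le_mul_of_nonneg_left hce2 hVT0)
  have hσ2 : (0:ℝ) < σ ^ 2 := by positivity
  have h8 : t ^ 2 * β ^ 2 * σ ^ 2 ≤ VT * c * (t ^ 2 * β) := by
    have h9 := mul_le_mul_of_nonneg_right h7 hσ2.le
    calc t ^ 2 * β ^ 2 * σ ^ 2 ≤ VT * ((t ^ 2 * β / σ ^ 2) * c) * σ ^ 2 := h9
      _ = VT * c * (t ^ 2 * β) := by field_simp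
  have ht2β : (0:ℝ) < t ^ 2 * β := by positivity
  refine le_of_mul_le_mul_right ?_ ht2β
  nlinarith [h8]

theorem stmt0 (p N : ℕ) (hp : 0 < p) (hN : 0 < N)
    (A : Matrix (Fin p) (Fin N) ℝ) (hA : IsUnit (A * Aᵀ).det)
    (σ : ℝ) (hσ : 0 < σ) (g : Fin p → ℝ)
    (V : Matrix (Fin p) (Fin p) ℝ) (hV : V = (A * Aᵀ)⁻¹)
    (T : (Fin N → ℝ) → ℝ)
    (hT : ∀ γ : Fin p → ℝ, MemLp T 2 (gaussianPi N (Aᵀ.mulVec γ) σ))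
    (u : (Fin N → ℝ) → ℝ) (hu : ∀ y, 0 ≤ u y) :
    (∃ γ : Fin p → ℝ, ∫ y, T y ∂(gaussianPi N (Aᵀ.mulVec γ) σ) ≠ g ⬝ᵥ γ) ∨
    (∀ (γ : Fin p → ℝ) (y' : Fin N → ℝ),
      u y' ^ 2 < σ ^ 2 * (g ⬝ᵥ V.mulVec g) →
      u y' ^ 2 < ∫ y, (T y - g ⬝ᵥ γ) ^ 2 ∂(gaussianPi N (Aᵀ.mulVec γ) σ)) := by
  by_cases hbias : ∃ γ : Fin p → ℝ, ∫ y, T y ∂(gaussianPi N (Aᵀ.mulVec γ) σ) ≠ g ⬝ᵥ γ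
  · exact Or.inl hbias
  push_neg at hbias
  right
  intro γ y' hlt
  haveI : Fact (0 < σ) := ⟨hσ⟩
  have hβpos : 0 < g ⬝ᵥ V.mulVec g := by nlinarith [sq_nonneg (u y'), hu y', pow_pos hσ 2]
  have hww : Aᵀ.mulVec (V.mulVec g) ⬝ᵥ Aᵀ.mulVec (V.mulVec g) = g ⬝ᵥ V.mulVec g := by
    rw [Matrix.dotProduct_mulVec, Matrix.vecMul_transpose, Matrix.mulVec_mulVec,
      Matrix.mulVec_mulVec, hV, Matrix.mul_nonsing_inv _ hA, Matrix.one_mulVec]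
  have hm' : ∀ s : ℝ, Aᵀ.mulVec (γ + s • V.mulVec g)
      = Aᵀ.mulVec γ + s • Aᵀ.mulVec (V.mulVec g) := by
    intro s
    rw [Matrix.mulVec_add, Matrix.mulVec_smul]
  have hmean : ∀ s : ℝ,
      ∫ y, T y ∂(gaussianPi N (Aᵀ.mulVec γ + s • Aᵀ.mulVec (V.mulVec g)) σ)
        = g ⬝ᵥ γ + s * (g ⬝ᵥ V.mulVec g) := by
    intro s
    have h1 := hbias (γ + s • V.mulVec g)
    rw [hm' s] at h1
    rw [h1, dotProduct_add, dotProduct_smul, smul_eq_mul]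
  have hL2 : ∀ s : ℝ,
      MemLp T 2 (gaussianPi N (Aᵀ.mulVec γ + s • Aᵀ.mulVec (V.mulVec g)) σ) := by
    intro s
    rw [← hm' s]
    exact hT _
  have key : ∀ t : ℝ, 0 < t →
      σ ^ 2 * (g ⬝ᵥ V.mulVec g) ≤
        (∫ y, (T y - g ⬝ᵥ γ) ^ 2 ∂(gaussianPi N (Aᵀ.mulVec γ) σ)) *
          Real.exp (t ^ 2 * (g ⬝ᵥ V.mulVec g) / σ ^ 2) :=
    fun t ht => crb hσ _ _ _ _ hww hβpos T hmean hL2 t ht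
  have hfinal : σ ^ 2 * (g ⬝ᵥ V.mulVec g)
      ≤ ∫ y, (T y - g ⬝ᵥ γ) ^ 2 ∂(gaussianPi N (Aᵀ.mulVec γ) σ) := by
    set VT := ∫ y, (T y - g ⬝ᵥ γ) ^ 2 ∂(gaussianPi N (Aᵀ.mulVec γ) σ) with hVT
    have hcont : Filter.Tendsto
        (fun t : ℝ => VT * Real.exp (t ^ 2 * (g ⬝ᵥ V.mulVec g) / σ ^ 2))
        (nhdsWithin 0 (Set.Ioi 0))
        (nhds (VT * Real.exp (0 ^ 2 * (g ⬝ᵥ V.mulVec g) / σ ^ 2))) := by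
      apply Filter.Tendsto.mono_left _ nhdsWithin_le_nhds
      exact (Continuous.tendsto (by continuity) 0)
    have hev : ∀ᶠ t in nhdsWithin (0:ℝ) (Set.Ioi 0),
        σ ^ 2 * (g ⬝ᵥ V.mulVec g)
          ≤ VT * Real.exp (t ^ 2 * (g ⬝ᵥ V.mulVec g) / σ ^ 2) :=
      eventually_nhdsWithin_of_forall (fun t ht => key t ht)
    have := ge_of_tendsto hcont hev
    simpa using this
  exact lt_of_lt_of_le hlt hfinal
end

section
/- (Cramér–Rao bound for the Gaussian linear model.) Let p, N be positive integers, let A be a real p×N matrix such that A Aᵀ is invertible, set V = (A Aᵀ)⁻¹, let σ > 0 and g ∈ ℝᵖ. Let T : ℝᴺ → ℝ be square-integrable with respect to N(Aᵀγ, σ²I_N) for every γ ∈ ℝᵖ and unbiased for gᵀγ, i.e., E_{y ∼ N(Aᵀγ, σ²I_N)}[T(y)] = gᵀγ for all γ ∈ ℝᵖ. Then for every γ ∈ ℝᵖ the variance of T under y ∼ N(Aᵀγ, σ²I_N) satisfies Var(T) ≥ σ² gᵀ V g. -/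
open MeasureTheory Matrix Real
open scoped ENNReal NNReal

namespace CRHelp

noncomputable def gd (N : ℕ) (σ : ℝ) (μ : Fin N → ℝ) (y : Fin N → ℝ) : ℝ :=
  (2 * Real.pi * σ ^ 2) ^ (-(N : ℝ) / 2) *
    Real.exp (- (∑ i, (y i - μ i) ^ 2) / (2 * σ ^ 2))

variable {N : ℕ} {σ : ℝ}

lemma c_pos (hσ : 0 < σ) : (0:ℝ) < 2 * Real.pi * σ ^ 2 := by positivity

lemma gd_pos (hσ : 0 < σ) (μ y : Fin N → ℝ) : 0 < gd N σ μ y := by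
  have := c_pos hσ
  unfold gd; positivity

lemma gd_meas (μ : Fin N → ℝ) : Measurable (gd N σ μ) := by
  unfold gd; fun_prop

lemma gaussianPi_eq (μ : Fin N → ℝ) :
    gaussianPi N μ σ =
      volume.withDensity (fun y => ((gd N σ μ y).toNNReal : ℝ≥0∞)) := by
  rfl

lemma integral_gaussianPi (hσ : 0 < σ) (μ : Fin N → ℝ) (f : (Fin N → ℝ) → ℝ) :
    ∫ y, f y ∂(gaussianPi N μ σ) = ∫ y, gd N σ μ y * f y := by
  rw [gaussianPi_eq, integral_withDensity_eq_integral_smul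
    (by exact (gd_meas μ).real_toNNReal) f]
  congr 1; funext y
  simp [NNReal.smul_def, Real.coe_toNNReal _ (gd_pos hσ μ y).le]

lemma integrable_gaussianPi_iff (hσ : 0 < σ) (μ : Fin N → ℝ) (f : (Fin N → ℝ) → ℝ) :
    Integrable f (gaussianPi N μ σ) ↔ Integrable (fun y => gd N σ μ y * f y) volume := by
  rw [gaussianPi_eq, integrable_withDensity_iff_integrable_smul
    (by exact (gd_meas μ).real_toNNReal)]
  constructor <;> intro h <;> refine h.congr (Filter.Eventually.of_forall fun y => ?_) <;>
    simp [NNReal.smul_def, Real.coe_toNNReal _ (gd_pos hσ μ y).le]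

lemma oneD_int (hσ : 0 < σ) (m : ℝ) :
    Integrable (fun x : ℝ => Real.exp (-(x - m)^2/(2*σ^2))) volume := by
  have hb : 0 < (2*σ^2)⁻¹ := by positivity
  have h := (integrable_exp_neg_mul_sq hb).comp_sub_right m
  refine h.congr (Filter.Eventually.of_forall fun x => ?_)
  simp only []
  rw [show -(2*σ^2)⁻¹ * (x - m)^2 = -(x - m)^2/(2*σ^2) by ring]

lemma oneD_val (hσ : 0 < σ) (m : ℝ) :
    ∫ x : ℝ, Real.exp (-(x - m)^2/(2*σ^2)) = Real.sqrt (2*π*σ^2) := by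
  have hb : 0 < (2*σ^2)⁻¹ := by positivity
  have h1 : ∀ x : ℝ, Real.exp (-(x - m)^2/(2*σ^2)) =
      (fun a => Real.exp (-(2*σ^2)⁻¹ * a^2)) (x - m) := by
    intro x; simp only []; rw [show -(2*σ^2)⁻¹ * (x-m)^2 = -(x - m)^2/(2*σ^2) by ring]
  simp_rw [h1]
  rw [integral_sub_right_eq_self (fun a => Real.exp (-(2*σ^2)⁻¹ * a^2)) m,
    integral_gaussian]
  rw [show π / (2*σ^2)⁻¹ = 2*π*σ^2 by field_simp]

lemma gd_prod (hσ : 0 < σ) (μ y : Fin N → ℝ) :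
    gd N σ μ y = ∏ i, ((2*π*σ^2) ^ (-(1:ℝ)/2) * Real.exp (-(y i - μ i)^2/(2*σ^2))) := by
  have hc := c_pos hσ
  rw [Finset.prod_mul_distrib, Finset.prod_const, ← Real.exp_sum]
  unfold gd
  congr 1
  · rw [Finset.card_univ, Fintype.card_fin, ← Real.rpow_natCast ((2*π*σ^2) ^ (-(1:ℝ)/2)) N,
      ← Real.rpow_mul hc.le]
    congr 1; ring
  · congr 1
    rw [← Finset.sum_div, ← Finset.sum_neg_distrib]

lemma integrable_gd (hσ : 0 < σ) (μ : Fin N → ℝ) :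
    Integrable (gd N σ μ) volume := by
  have h : Integrable (fun y : Fin N → ℝ =>
      ∏ i, ((2*π*σ^2) ^ (-(1:ℝ)/2) * Real.exp (-(y i - μ i)^2/(2*σ^2)))) volume :=
    Integrable.fintype_prod_dep (fun i => (oneD_int hσ (μ i)).const_mul _)
  exact h.congr (Filter.Eventually.of_forall fun y => (gd_prod hσ μ y).symm)

lemma integral_gd (hσ : 0 < σ) (μ : Fin N → ℝ) :
    ∫ y, gd N σ μ y = 1 := by
  have hc := c_pos hσ
  simp_rw [gd_prod hσ μ]
  rw [volume_pi, MeasureTheory.integral_fintype_prod_eq_prod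
    (f := fun i (x : ℝ) => (2*π*σ^2) ^ (-(1:ℝ)/2) * Real.exp (-(x - μ i)^2/(2*σ^2)))]
  have h1 : ∀ i : Fin N, (∫ x : ℝ, (2*π*σ^2) ^ (-(1:ℝ)/2) * Real.exp (-(x - μ i)^2/(2*σ^2))) = 1 := by
    intro i
    rw [MeasureTheory.integral_const_mul, oneD_val hσ, Real.sqrt_eq_rpow,
      ← Real.rpow_add hc]
    norm_num
  simp [h1]

lemma isProb (hσ : 0 < σ) (μ : Fin N → ℝ) :
    IsProbabilityMeasure (gaussianPi N μ σ) := by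
  constructor
  have : gaussianPi N μ σ = volume.withDensity (fun y => ENNReal.ofReal (gd N σ μ y)) := rfl
  rw [this, withDensity_apply _ MeasurableSet.univ, Measure.restrict_univ]
  rw [← ofReal_integral_eq_lintegral_ofReal (integrable_gd hσ μ)
    (Filter.Eventually.of_forall fun y => (gd_pos hσ μ y).le), integral_gd hσ μ]
  simp

noncomputable def Lf (N : ℕ) (σ : ℝ) (v μ : Fin N → ℝ) (y : Fin N → ℝ) : ℝ :=
  Real.exp ((∑ i, v i * (y i - μ i)) / σ^2 - (∑ i, (v i)^2) / (2*σ^2))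

lemma Lf_pos (v μ y : Fin N → ℝ) : 0 < Lf N σ v μ y := Real.exp_pos _

lemma Lf_meas (v μ : Fin N → ℝ) : Measurable (Lf N σ v μ) := by
  unfold Lf; fun_prop

lemma gd_shift (hσ : 0 < σ) (μ v y : Fin N → ℝ) :
    gd N σ (μ + v) y = gd N σ μ y * Lf N σ v μ y := by
  unfold gd Lf
  simp only [mul_assoc, ← Real.exp_add]
  congr 2
  have hs : ∑ i, (y i - (μ + v) i)^2
      = ∑ i, (y i - μ i)^2 - 2*(∑ i, v i * (y i - μ i)) + ∑ i, (v i)^2 := by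
    have hpt : ∀ i, (y i - (μ + v) i)^2
        = (y i - μ i)^2 - 2*(v i * (y i - μ i)) + (v i)^2 := fun i => by
      simp only [Pi.add_apply]; ring
    simp_rw [hpt, Finset.sum_add_distrib, Finset.sum_sub_distrib, ← Finset.mul_sum]
  rw [hs]
  have h2 : (σ:ℝ)^2 ≠ 0 := by positivity
  field_simp
  ring

lemma Lf_sq (hσ : 0 < σ) (v μ y : Fin N → ℝ) :
    (Lf N σ v μ y)^2 = Real.exp ((∑ i, (v i)^2)/σ^2) * Lf N σ (fun i => 2 * v i) μ y := by
  unfold Lf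
  rw [sq, ← Real.exp_add, ← Real.exp_add]
  congr 1
  have h2 : ∑ i, (2 * v i)^2 = 4 * ∑ i, (v i)^2 := by
    rw [Finset.mul_sum]; exact Finset.sum_congr rfl fun i _ => by ring
  have h3 : ∑ i, (2 * v i) * (y i - μ i) = 2 * ∑ i, v i * (y i - μ i) := by
    rw [Finset.mul_sum]; exact Finset.sum_congr rfl fun i _ => by ring
  rw [h2, h3]
  have hh : (σ:ℝ)^2 ≠ 0 := by positivity
  field_simp
  ring

lemma integral_shift (hσ : 0 < σ) (μ v : Fin N → ℝ) (f : (Fin N → ℝ) → ℝ) :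
    ∫ y, f y ∂(gaussianPi N (μ + v) σ) = ∫ y, Lf N σ v μ y * f y ∂(gaussianPi N μ σ) := by
  rw [integral_gaussianPi hσ, integral_gaussianPi hσ]
  congr 1; funext y
  rw [gd_shift hσ]; ring

lemma integrable_shift (hσ : 0 < σ) (μ v : Fin N → ℝ) (f : (Fin N → ℝ) → ℝ) :
    Integrable f (gaussianPi N (μ + v) σ) ↔
      Integrable (fun y => Lf N σ v μ y * f y) (gaussianPi N μ σ) := by
  rw [integrable_gaussianPi_iff hσ, integrable_gaussianPi_iff hσ]
  constructor <;> intro h <;> refine h.congr (Filter.Eventually.of_forall fun y => ?_) <;>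
    simp only [] <;> rw [gd_shift hσ] <;> ring

lemma integrable_Lf (hσ : 0 < σ) (μ v : Fin N → ℝ) :
    Integrable (Lf N σ v μ) (gaussianPi N μ σ) := by
  have h := (integrable_shift hσ μ v (fun _ => 1)).mp
    (by have := isProb hσ (μ + v); exact integrable_const 1)
  exact h.congr (Filter.Eventually.of_forall fun y => by simp)

lemma integral_Lf (hσ : 0 < σ) (μ v : Fin N → ℝ) :
    ∫ y, Lf N σ v μ y ∂(gaussianPi N μ σ) = 1 := by
  have h := integral_shift hσ μ v (fun _ => 1)
  have := isProb hσ (μ + v)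
  simp only [mul_one] at h
  rw [← h]
  simp

lemma integrable_Lf_sq (hσ : 0 < σ) (μ v : Fin N → ℝ) :
    Integrable (fun y => (Lf N σ v μ y)^2) (gaussianPi N μ σ) := by
  have h := (integrable_Lf hσ μ (fun i => 2 * v i)).const_mul
    (Real.exp ((∑ i, (v i)^2)/σ^2))
  exact h.congr (Filter.Eventually.of_forall fun y => (Lf_sq hσ v μ y).symm)

lemma integral_Lf_sq (hσ : 0 < σ) (μ v : Fin N → ℝ) :
    ∫ y, (Lf N σ v μ y)^2 ∂(gaussianPi N μ σ) = Real.exp ((∑ i, (v i)^2)/σ^2) := by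
  simp_rw [Lf_sq hσ]
  rw [MeasureTheory.integral_const_mul, integral_Lf hσ μ (fun i => 2 * v i), mul_one]


lemma memℒp_Lf (hσ : 0 < σ) (μ v : Fin N → ℝ) :
    MemLp (Lf N σ v μ) 2 (gaussianPi N μ σ) := by
  refine (memLp_two_iff_integrable_sq ((Lf_meas v μ).aestronglyMeasurable)).mpr ?_
  exact integrable_Lf_sq hσ μ v

end CRHelp

lemma cs_integral {α : Type*} [MeasurableSpace α] {μ : Measure α} [IsFiniteMeasure μ]
    {f g : α → ℝ} (hf : MemLp f 2 μ) (hg : MemLp g 2 μ) :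
    (∫ x, f x * g x ∂μ)^2 ≤ (∫ x, f x ^ 2 ∂μ) * (∫ x, g x ^ 2 ∂μ) := by
  have hf2 : Integrable (fun x => f x ^ 2) μ := hf.integrable_sq
  have hg2 : Integrable (fun x => g x ^ 2) μ := hg.integrable_sq
  have hfg : Integrable (fun x => f x * g x) μ := by
    have h := hg.smul (φ := f) hf (p := 2) (q := 2) (r := 1)
    have h1 : Integrable (f • g) μ := memLp_one_iff_integrable.mp h
    exact h1.congr (Filter.Eventually.of_forall fun x => by
      simp [Pi.smul_apply, smul_eq_mul])
  have key : ∀ t : ℝ, 0 ≤ (∫ x, g x ^ 2 ∂μ) * (t*t) + (2 * ∫ x, f x * g x ∂μ) * t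
      + (∫ x, f x ^ 2 ∂μ) := by
    intro t
    have h0 : (0:ℝ) ≤ ∫ x, (f x + t * g x)^2 ∂μ := integral_nonneg fun x => sq_nonneg _
    have heq : ∫ x, (f x + t * g x)^2 ∂μ
        = (∫ x, f x ^2 ∂μ) + (2*t) * (∫ x, f x * g x ∂μ) + (t^2) * (∫ x, g x^2 ∂μ) := by
      rw [show (fun x => (f x + t*g x)^2)
          = fun x => f x ^2 + (2*t)*(f x * g x) + t^2 * g x^2 from funext fun x => by ring]
      have e1 := integral_add (μ := μ)
        (f := fun x => f x ^2 + 2*t*(f x * g x)) (g := fun x => t^2 * g x ^2)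
        (hf2.add (hfg.const_mul _)) (hg2.const_mul _)
      have e2 := integral_add (μ := μ)
        (f := fun x => f x ^2) (g := fun x => 2*t*(f x * g x))
        hf2 (hfg.const_mul _)
      rw [e1, e2]
      simp only [MeasureTheory.integral_const_mul]
    nlinarith [h0, heq]
  have hd := discrim_le_zero key
  rw [discrim] at hd
  nlinarith [hd]

/-- Cramér–Rao bound for the Gaussian linear model. -/
theorem stmt1 (p N : ℕ) (hp : 0 < p) (hN : 0 < N)
    (A : Matrix (Fin p) (Fin N) ℝ) (hA : IsUnit (A * Aᵀ).det)
    (V : Matrix (Fin p) (Fin p) ℝ) (hV : V = (A * Aᵀ)⁻¹)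
    (σ : ℝ) (hσ : 0 < σ) (g : Fin p → ℝ)
    (T : (Fin N → ℝ) → ℝ)
    (hT : ∀ γ : Fin p → ℝ, MemLp T 2 (gaussianPi N (Aᵀ.mulVec γ) σ))
    (hunbiased : ∀ γ : Fin p → ℝ,
      ∫ y, T y ∂(gaussianPi N (Aᵀ.mulVec γ) σ) = g ⬝ᵥ γ) :
    ∀ γ : Fin p → ℝ,
      σ ^ 2 * (g ⬝ᵥ V.mulVec g) ≤
        ProbabilityTheory.variance T (gaussianPi N (Aᵀ.mulVec γ) σ) := by
  intro γ
  set q : ℝ := g ⬝ᵥ V.mulVec g with hqdef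
  set μ0 : Fin N → ℝ := Aᵀ.mulVec γ with hμ0
  haveI : IsProbabilityMeasure (gaussianPi N μ0 σ) := CRHelp.isProb hσ μ0
  rcases le_or_gt q 0 with hq | hq
  · exact (mul_nonpos_of_nonneg_of_nonpos (by positivity) hq).trans
      (ProbabilityTheory.variance_nonneg _ _)
  set x : Fin p → ℝ := V.mulVec g with hx
  set w : Fin N → ℝ := Aᵀ.mulVec x with hwdef
  have hAAV : (A * Aᵀ).mulVec x = g := by
    rw [hx, hV, Matrix.mulVec_mulVec, Matrix.mul_nonsing_inv _ hA, Matrix.one_mulVec]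
  have hw2 : ∑ i, (w i)^2 = q := by
    have h1 : ∑ i, (w i)^2 = w ⬝ᵥ w := by simp [dotProduct, sq]
    rw [h1]
    nth_rewrite 2 [hwdef]
    rw [Matrix.dotProduct_mulVec, hwdef, Matrix.vecMul_transpose,
      Matrix.mulVec_mulVec, hAAV, hqdef, hx, dotProduct_comm]
  set Var := ProbabilityTheory.variance T (gaussianPi N μ0 σ) with hVardef
  have hVar0 : 0 ≤ Var := ProbabilityTheory.variance_nonneg _ _
  have key : ∀ t : ℝ, (t*q)^2 ≤ Var * (Real.exp (t^2*q/σ^2) - 1) := by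
    intro t
    set v : Fin N → ℝ := t • w with hvdef
    have hvsum : ∑ i, (v i)^2 = t^2 * q := by
      simp only [hvdef, Pi.smul_apply, smul_eq_mul, mul_pow, ← Finset.mul_sum, hw2]
    have hmean : Aᵀ.mulVec (γ + t • x) = μ0 + v := by
      rw [Matrix.mulVec_add, Matrix.mulVec_smul, hμ0, hvdef, hwdef]
    haveI := CRHelp.isProb hσ (Aᵀ.mulVec (γ + t • x))
    have hTL_int : Integrable (fun y => CRHelp.Lf N σ v μ0 y * T y) (gaussianPi N μ0 σ) := by
      rw [← CRHelp.integrable_shift hσ μ0 v T, ← hmean]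
      exact (hT _).integrable one_le_two
    have hT_int : Integrable T (gaussianPi N μ0 σ) := (hT γ).integrable one_le_two
    have hL_int := CRHelp.integrable_Lf hσ μ0 v
    have hTL : ∫ y, CRHelp.Lf N σ v μ0 y * T y ∂(gaussianPi N μ0 σ) = g ⬝ᵥ γ + t * q := by
      rw [← CRHelp.integral_shift hσ μ0 v T, ← hmean, hunbiased, dotProduct_add,
        dotProduct_smul]
      simp only [smul_eq_mul, hqdef, hx]
    have hL1 : ∫ y, CRHelp.Lf N σ v μ0 y ∂(gaussianPi N μ0 σ) = 1 :=
      CRHelp.integral_Lf hσ μ0 v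
    have hL2 : ∫ y, (CRHelp.Lf N σ v μ0 y)^2 ∂(gaussianPi N μ0 σ)
        = Real.exp (t^2*q/σ^2) := by
      rw [CRHelp.integral_Lf_sq hσ μ0 v, hvsum]
    have hm : ∫ y, T y ∂(gaussianPi N μ0 σ) = g ⬝ᵥ γ := hunbiased γ
    set m : ℝ := g ⬝ᵥ γ with hmdef
    have hTc : MemLp (fun y => T y - m) 2 (gaussianPi N μ0 σ) :=
      (hT γ).sub (memLp_const m)
    have hW : MemLp (fun y => CRHelp.Lf N σ v μ0 y - 1) 2 (gaussianPi N μ0 σ) :=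
      (CRHelp.memℒp_Lf hσ μ0 v).sub (memLp_const 1)
    have hcs := cs_integral hTc hW
    have hTcW : ∫ y, (T y - m) * (CRHelp.Lf N σ v μ0 y - 1) ∂(gaussianPi N μ0 σ)
        = t * q := by
      have hexp : (fun y => (T y - m) * (CRHelp.Lf N σ v μ0 y - 1))
          = fun y => (CRHelp.Lf N σ v μ0 y * T y - T y)
            - (m * CRHelp.Lf N σ v μ0 y - m) := funext fun y => by ring
      have e1 := integral_sub (μ := gaussianPi N μ0 σ)
        (f := fun y => CRHelp.Lf N σ v μ0 y * T y - T y)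
        (g := fun y => m * CRHelp.Lf N σ v μ0 y - m)
        (hTL_int.sub hT_int) ((hL_int.const_mul m).sub (integrable_const m))
      have e2 := integral_sub (μ := gaussianPi N μ0 σ)
        (f := fun y => CRHelp.Lf N σ v μ0 y * T y) (g := fun y => T y)
        hTL_int hT_int
      have e3 := integral_sub (μ := gaussianPi N μ0 σ)
        (f := fun y => m * CRHelp.Lf N σ v μ0 y) (g := fun _ => m)
        (hL_int.const_mul m) (integrable_const m)
      rw [hexp, e1, e2, e3, MeasureTheory.integral_const_mul, hTL, hm, hL1, integral_const]
      simp only [measure_univ, probReal_univ, ENNReal.toReal_one, smul_eq_mul, one_mul, mul_one]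
      ring
    have hW2 : ∫ y, (CRHelp.Lf N σ v μ0 y - 1)^2 ∂(gaussianPi N μ0 σ)
        = Real.exp (t^2*q/σ^2) - 1 := by
      have hexp : (fun y => (CRHelp.Lf N σ v μ0 y - 1)^2)
          = fun y => (CRHelp.Lf N σ v μ0 y)^2 - (2 * CRHelp.Lf N σ v μ0 y - 1) :=
        funext fun y => by ring
      have e1 := integral_sub (μ := gaussianPi N μ0 σ)
        (f := fun y => (CRHelp.Lf N σ v μ0 y)^2)
        (g := fun y => 2 * CRHelp.Lf N σ v μ0 y - 1)
        (CRHelp.integrable_Lf_sq hσ μ0 v) ((hL_int.const_mul 2).sub (integrable_const 1))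
      have e2 := integral_sub (μ := gaussianPi N μ0 σ)
        (f := fun y => 2 * CRHelp.Lf N σ v μ0 y) (g := fun _ => (1:ℝ))
        (hL_int.const_mul 2) (integrable_const 1)
      rw [hexp, e1, e2, MeasureTheory.integral_const_mul, hL2, hL1, integral_const]
      simp only [measure_univ, probReal_univ, ENNReal.toReal_one, smul_eq_mul, one_mul, mul_one]
      ring
    have hvar : ∫ y, (T y - m)^2 ∂(gaussianPi N μ0 σ) = Var := by
      rw [hVardef, ProbabilityTheory.variance_eq_integral (hT γ).aemeasurable, hm]
    calc (t*q)^2 = (∫ y, (T y - m) * (CRHelp.Lf N σ v μ0 y - 1) ∂(gaussianPi N μ0 σ))^2 := by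
          rw [hTcW]
      _ ≤ (∫ y, (T y - m)^2 ∂(gaussianPi N μ0 σ))
            * (∫ y, (CRHelp.Lf N σ v μ0 y - 1)^2 ∂(gaussianPi N μ0 σ)) := hcs
      _ = Var * (Real.exp (t^2*q/σ^2) - 1) := by rw [hvar, hW2]
  have key2 : ∀ t : ℝ, 0 < t → σ^2 * q ≤ Var * Real.exp (t^2*q/σ^2) := by
    intro t ht
    have h := key t
    have hexp : Real.exp (t^2*q/σ^2) - 1 ≤ (t^2*q/σ^2) * Real.exp (t^2*q/σ^2) := by
      have h2 := Real.add_one_le_exp (-(t^2*q/σ^2))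
      have h3 := Real.exp_pos (t^2*q/σ^2)
      have h4 : Real.exp (-(t^2*q/σ^2)) * Real.exp (t^2*q/σ^2) = 1 := by
        rw [← Real.exp_add]; simp
      nlinarith
    have hσ2 : (0:ℝ) < σ^2 := by positivity
    have ht2 : (0:ℝ) < t^2 := by positivity
    have h5 : (t*q)^2 ≤ Var * ((t^2*q/σ^2) * Real.exp (t^2*q/σ^2)) :=
      h.trans (mul_le_mul_of_nonneg_left hexp hVar0)
    set E := Real.exp (t^2*q/σ^2) with hEdef
    have h8 : σ^2 * (t^2*q^2) ≤ Var * t^2 * q * E := by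
      have h7 := mul_le_mul_of_nonneg_left h5 hσ2.le
      calc σ^2*(t^2*q^2) = σ^2 * (t*q)^2 := by ring
        _ ≤ σ^2 * (Var * (t^2*q/σ^2 * E)) := h7
        _ = Var * t^2 * q * E := by field_simp
    have h9 : (t^2*q) * (σ^2*q) ≤ (t^2*q)*(Var*E) := by nlinarith [h8]
    exact le_of_mul_le_mul_left h9 (by positivity)
  have hcont : Filter.Tendsto (fun t : ℝ => Var * Real.exp (t^2*q/σ^2))
      (nhdsWithin 0 (Set.Ioi 0)) (nhds Var) := by
    have hc : Continuous fun t : ℝ => Var * Real.exp (t^2*q/σ^2) := by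
      fun_prop
    have h0 := hc.tendsto 0
    simp only [ne_eq, OfNat.ofNat_ne_zero, not_false_eq_true, zero_pow, zero_mul,
      zero_div, Real.exp_zero, mul_one] at h0
    exact h0.mono_left nhdsWithin_le_nhds
  exact ge_of_tendsto hcont
    (Filter.eventually_of_mem self_mem_nhdsWithin fun t ht => key2 t ht)
end

section
/- (Exact probability matching of the anchor model.) Let p, N be positive integers, let A be a real p×N matrix with A Aᵀ invertible, set V = (A Aᵀ)⁻¹, fix γ ∈ ℝᵖ, σ > 0 and g ∈ ℝᵖ with gᵀ V g > 0, and write u = σ √(gᵀ V g). Then for every z > 0, the probability under y ∼ N(Aᵀγ, σ²I_N) that |gᵀ V A y − gᵀγ| ≤ z·u equals the measure of the interval [−z, z] under the standard Gaussian N(0,1) on ℝ. In particular, the credible interval gᵀγ̂ ± z·u, which has posterior credibility Φ(z) − Φ(−z) under the flat-prior posterior N(γ̂, σ²V), has frequentist coverage probability exactly Φ(z) − Φ(−z) under repeated sampling of y. -/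
open MeasureTheory Matrix Real ProbabilityTheory

lemma prod_density (N : ℕ) (σ : ℝ) (hσ : 0 < σ) (x : Fin N → ℝ) :
    (2 * Real.pi * σ ^ 2) ^ (-(N : ℝ) / 2) *
        Real.exp (- (∑ i, (x i) ^ 2) / (2 * σ ^ 2))
      = ∏ i, gaussianPDFReal 0 (NNReal.mk (σ ^ 2) (sq_nonneg σ)) (x i) := by
  have hc : (0:ℝ) < 2 * Real.pi * σ ^ 2 := by positivity
  have h1 : (2 * Real.pi * σ ^ 2) ^ (-(N : ℝ) / 2)
      = ((Real.sqrt (2 * Real.pi * σ ^ 2))⁻¹) ^ N := by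
    rw [Real.sqrt_eq_rpow, ← Real.rpow_neg_one, ← Real.rpow_natCast (_ ^ (-1:ℝ)) N,
      ← Real.rpow_mul hc.le, ← Real.rpow_mul hc.le]
    ring_nf
  have h2 : Real.exp (- (∑ i, (x i) ^ 2) / (2 * σ ^ 2))
      = ∏ i, Real.exp (- (x i) ^ 2 / (2 * σ ^ 2)) := by
    rw [← Real.exp_sum]
    congr 1
    rw [← Finset.sum_div, ← Finset.sum_neg_distrib]
  rw [h1, h2, gaussianPDFReal_def, Finset.prod_mul_distrib, Finset.prod_const]
  simp [Finset.card_univ]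

lemma gaussianPi_cylinder (N : ℕ) (hN : 0 < N) (σ : ℝ) (hσ : 0 < σ) (a b : ℝ) :
    (∫⁻ x in {x : Fin N → ℝ | x ⟨0, hN⟩ ∈ Set.Icc a b}, ENNReal.ofReal
      ((2 * Real.pi * σ ^ 2) ^ (-(N : ℝ) / 2) *
        Real.exp (- (∑ i, (x i) ^ 2) / (2 * σ ^ 2))))
    = gaussianReal 0 (NNReal.mk (σ ^ 2) (sq_nonneg σ)) (Set.Icc a b) := by
  set i₀ : Fin N := ⟨0, hN⟩
  set v : NNReal := (NNReal.mk (σ ^ 2) (sq_nonneg σ)) with hv'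
  have hv : v ≠ 0 := fun hcon =>
    (pow_ne_zero 2 hσ.ne') (by simpa [hv'] using congrArg NNReal.toReal hcon)
  set f : ℝ → ℝ := gaussianPDFReal 0 v with hf
  set h : Fin N → ℝ → ℝ := fun i t =>
    if i = i₀ then (Set.Icc a b).indicator f t else f t with hh
  have hT : MeasurableSet {x : Fin N → ℝ | x i₀ ∈ Set.Icc a b} :=
    (measurable_pi_apply i₀) measurableSet_Icc
  have hpt : ∀ x : Fin N → ℝ,
      {x : Fin N → ℝ | x i₀ ∈ Set.Icc a b}.indicator
        (fun x => ENNReal.ofReal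
          ((2 * Real.pi * σ ^ 2) ^ (-(N : ℝ) / 2) *
            Real.exp (- (∑ i, (x i) ^ 2) / (2 * σ ^ 2)))) x
      = ENNReal.ofReal (∏ i, h i (x i)) := by
    intro x
    by_cases hx : x i₀ ∈ Set.Icc a b
    · rw [Set.indicator_of_mem (show x ∈ {x : Fin N → ℝ | x i₀ ∈ Set.Icc a b} from hx),
        prod_density N σ hσ x]
      congr 1
      refine Finset.prod_congr rfl fun i _ => ?_
      by_cases hi : i = i₀
      · subst hi; simp [hh, Set.indicator_of_mem hx, hf, hv']
      · simp [hh, hi, hf, hv']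
    · rw [Set.indicator_of_notMem (show x ∉ {x : Fin N → ℝ | x i₀ ∈ Set.Icc a b} from hx)]
      rw [Finset.prod_eq_zero (Finset.mem_univ i₀) (by simp [hh, Set.indicator_of_notMem hx])]
      simp
  have hint : ∀ i, Integrable (h i) := by
    intro i
    by_cases hi : i = i₀ <;> simp only [hh, hi, if_true, if_false]
    · exact (integrable_gaussianPDFReal 0 v).indicator measurableSet_Icc
    · exact integrable_gaussianPDFReal 0 v
  calc (∫⁻ x in {x : Fin N → ℝ | x i₀ ∈ Set.Icc a b}, ENNReal.ofReal
      ((2 * Real.pi * σ ^ 2) ^ (-(N : ℝ) / 2) *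
        Real.exp (- (∑ i, (x i) ^ 2) / (2 * σ ^ 2))))
      = ∫⁻ y : Fin N → ℝ, ENNReal.ofReal (∏ i, h i (y i)) := by
        rw [← lintegral_indicator hT]
        exact lintegral_congr hpt
    _ = ENNReal.ofReal (∫ y : Fin N → ℝ, ∏ i, h i (y i)) := by
        refine (MeasureTheory.ofReal_integral_eq_lintegral_ofReal
          (Integrable.fintype_prod hint) ?_).symm
        refine Filter.Eventually.of_forall fun y => Finset.prod_nonneg fun i _ => ?_
        by_cases hi : i = i₀ <;> simp only [hh, hi, if_true, if_false]
        · exact Set.indicator_nonneg (fun t _ => gaussianPDFReal_nonneg 0 v t) _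
        · exact gaussianPDFReal_nonneg 0 v _
    _ = ENNReal.ofReal (∏ i, ∫ t, h i t) := by
        rw [integral_fintype_prod_volume_eq_prod]
    _ = ENNReal.ofReal (∫ t in Set.Icc a b, f t) := by
        congr 1
        rw [Finset.prod_eq_single i₀ (fun i _ hi => by
          simp only [hh, hi, if_false]
          exact integral_gaussianPDFReal_eq_one 0 hv) (by simp)]
        simp only [hh, if_true, if_pos rfl]
        exact integral_indicator measurableSet_Icc
    _ = gaussianReal 0 v (Set.Icc a b) := (gaussianReal_apply_eq_integral 0 hv _).symm

lemma gaussianReal_scale (σ z : ℝ) (hσ : 0 < σ) :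
    gaussianReal 0 (NNReal.mk (σ ^ 2) (sq_nonneg σ)) (Set.Icc (-(σ * z)) (σ * z)) =
      gaussianReal 0 1 (Set.Icc (-z) z) := by
  have h := gaussianReal_map_const_mul (μ := 0) (v := 1) σ
  rw [mul_zero, mul_one] at h
  rw [← h, Measure.map_apply (measurable_const_mul σ) measurableSet_Icc]
  congr 1
  ext t
  simp only [Set.mem_preimage, Set.mem_Icc]
  rw [show -(σ * z) = σ * (-z) by ring, mul_le_mul_iff_of_pos_left hσ, mul_le_mul_iff_of_pos_left hσ]

open scoped RealInnerProductSpace in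
lemma dotProduct_isometry (N : ℕ) (hN : 0 < N) (w : Fin N → ℝ) (r : ℝ) (hr : 0 < r)
    (hw : ∑ i, w i ^ 2 = r ^ 2) :
    ∃ Q : EuclideanSpace ℝ (Fin N) ≃ₗᵢ[ℝ] EuclideanSpace ℝ (Fin N),
      ∀ x : Fin N → ℝ,
        w ⬝ᵥ (WithLp.equiv 2 (Fin N → ℝ) (Q ((WithLp.equiv 2 (Fin N → ℝ)).symm x)))
          = r * x ⟨0, hN⟩ := by
  set i₀ : Fin N := ⟨0, hN⟩
  set W : EuclideanSpace ℝ (Fin N) := (WithLp.equiv 2 (Fin N → ℝ)).symm w with hW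
  set a : EuclideanSpace ℝ (Fin N) := EuclideanSpace.single i₀ r with ha
  have hWnorm : ‖W‖ = r := by
    rw [EuclideanSpace.norm_eq]
    simp only [Real.norm_eq_abs, sq_abs]
    have : ∀ i, W i = w i := fun i => rfl
    simp_rw [this, hw]
    exact Real.sqrt_sq hr.le
  have hanorm : ‖a‖ = r := by
    rw [ha, EuclideanSpace.norm_single]
    exact abs_of_pos hr
  obtain ⟨Q, hQa⟩ : ∃ Q : EuclideanSpace ℝ (Fin N) ≃ₗᵢ[ℝ] EuclideanSpace ℝ (Fin N),
      Q a = W :=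
    ⟨Submodule.reflection (ℝ ∙ (a - W))ᗮ, Submodule.reflection_sub (by rw [hanorm, hWnorm])⟩
  refine ⟨Q, fun x => ?_⟩
  have h2 : (inner ℝ W (Q ((WithLp.equiv 2 (Fin N → ℝ)).symm x)) : ℝ)
      = (inner ℝ a ((WithLp.equiv 2 (Fin N → ℝ)).symm x) : ℝ) := by
    conv_lhs => rw [← hQa]
    exact Q.inner_map_map a _
  have h3 : ∀ v : EuclideanSpace ℝ (Fin N),
      w ⬝ᵥ (WithLp.equiv 2 (Fin N → ℝ) v) = (inner ℝ W v : ℝ) := by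
    intro v
    rw [PiLp.inner_apply]
    simp [dotProduct, hW, mul_comm]
  rw [h3, h2, ha, EuclideanSpace.inner_single_left]
  simp

/-- Exact probability matching of the anchor model: the interval
`gᵀγ̂ ± z·u` with `u = σ√(gᵀVg)` has frequentist coverage probability equal
to the standard normal measure of `[−z, z]`. -/
theorem stmt6 (p N : ℕ) (hp : 0 < p) (hN : 0 < N)
    (A : Matrix (Fin p) (Fin N) ℝ) (hA : IsUnit (A * Aᵀ).det)
    (V : Matrix (Fin p) (Fin p) ℝ) (hV : V = (A * Aᵀ)⁻¹)
    (γ : Fin p → ℝ) (σ : ℝ) (hσ : 0 < σ)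
    (g : Fin p → ℝ) (hg : 0 < g ⬝ᵥ V.mulVec g)
    (u : ℝ) (hu : u = σ * Real.sqrt (g ⬝ᵥ V.mulVec g)) :
    ∀ z : ℝ, 0 < z →
      gaussianPi N (Aᵀ.mulVec γ) σ
          {y | |g ⬝ᵥ V.mulVec (A.mulVec y) - g ⬝ᵥ γ| ≤ z * u} =
        gaussianReal 0 1 (Set.Icc (-z) z) := by
  intro z hz
  set i₀ : Fin N := ⟨0, hN⟩
  set μ : Fin N → ℝ := Aᵀ.mulVec γ with hμ
  set w : Fin N → ℝ := Matrix.vecMul g (V * A) with hw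
  -- linear algebra
  have hVA : V * (A * Aᵀ) = 1 := by rw [hV]; exact Matrix.nonsing_inv_mul _ hA
  have hVsymm : Vᵀ = V := by
    rw [hV, Matrix.transpose_nonsing_inv]
    congr 1
    rw [Matrix.transpose_mul, Matrix.transpose_transpose]
  have hwy : ∀ y : Fin N → ℝ, g ⬝ᵥ V.mulVec (A.mulVec y) = w ⬝ᵥ y := by
    intro y
    rw [Matrix.mulVec_mulVec, Matrix.dotProduct_mulVec]
  have hwμ : w ⬝ᵥ μ = g ⬝ᵥ γ := by
    rw [hμ, hw, Matrix.dotProduct_mulVec, Matrix.vecMul_vecMul, Matrix.mul_assoc, hVA, Matrix.vecMul_one]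
  have hVAVA : (V * A) * (V * A)ᵀ = V := by
    rw [Matrix.transpose_mul, hVsymm, Matrix.mul_assoc V A (Aᵀ * V),
      ← Matrix.mul_assoc A Aᵀ V, ← Matrix.mul_assoc V (A * Aᵀ) V, hVA, Matrix.one_mul]
  have hww : ∑ i, w i ^ 2 = g ⬝ᵥ V.mulVec g := by
    have h1 : ∑ i, w i ^ 2 = w ⬝ᵥ w := by
      simp [dotProduct, pow_two]
    rw [h1]
    nth_rewrite 2 [hw]
    rw [← Matrix.mulVec_transpose, Matrix.dotProduct_mulVec, hw, Matrix.vecMul_vecMul,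
      hVAVA, ← Matrix.dotProduct_mulVec]
  set r : ℝ := Real.sqrt (g ⬝ᵥ V.mulVec g) with hrdef
  have hr : 0 < r := Real.sqrt_pos.2 hg
  have hwr : ∑ i, w i ^ 2 = r ^ 2 := by rw [hww, hrdef, Real.sq_sqrt hg.le]
  obtain ⟨Q, hQ⟩ := dotProduct_isometry N hN w r hr hwr
  -- the measure-preserving change of variables
  set e : EuclideanSpace ℝ (Fin N) ≃ᵐ (Fin N → ℝ) := (MeasurableEquiv.toLp 2 (Fin N → ℝ)).symm
  set Feq : (Fin N → ℝ) ≃ᵐ (Fin N → ℝ) :=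
    (e.symm.trans ((Q.toHomeomorph.toMeasurableEquiv).trans e)).trans
      (Homeomorph.addLeft μ).toMeasurableEquiv with hFeq
  have hFx : ∀ x : Fin N → ℝ,
      Feq x = μ + WithLp.equiv 2 (Fin N → ℝ) (Q ((WithLp.equiv 2 (Fin N → ℝ)).symm x)) := by
    intro x; rfl
  have he : MeasurePreserving e volume volume :=
    EuclideanSpace.volume_preserving_symm_measurableEquiv_toLp (Fin N)
  have hF : MeasurePreserving Feq volume volume := by
    have h1 : MeasurePreserving (fun x : Fin N → ℝ => μ + x) volume volume :=
      measurePreserving_add_left volume μ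
    exact h1.comp (he.comp (Q.measurePreserving.comp he.symm))
  -- rewrite the event
  have hmeasw : Measurable fun y : Fin N → ℝ => w ⬝ᵥ y := by
    have : (fun y : Fin N → ℝ => w ⬝ᵥ y) = fun y => ∑ i, w i * y i := rfl
    rw [this]
    exact Finset.measurable_sum _ fun i _ => by fun_prop
  have hS : {y : Fin N → ℝ | |g ⬝ᵥ V.mulVec (A.mulVec y) - g ⬝ᵥ γ| ≤ z * u}
      = {y : Fin N → ℝ | |w ⬝ᵥ y - g ⬝ᵥ γ| ≤ z * u} := Set.ext fun y => by
    simp only [Set.mem_setOf_eq, hwy y]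
  have hSm : MeasurableSet {y : Fin N → ℝ | |w ⬝ᵥ y - g ⬝ᵥ γ| ≤ z * u} :=
    measurableSet_le ((hmeasw.sub measurable_const).abs) measurable_const
  have hpre : Feq ⁻¹' {y : Fin N → ℝ | |w ⬝ᵥ y - g ⬝ᵥ γ| ≤ z * u}
      = {x : Fin N → ℝ | x i₀ ∈ Set.Icc (-(σ * z)) (σ * z)} := by
    ext x
    simp only [Set.mem_preimage, Set.mem_setOf_eq, Set.mem_Icc]
    rw [hFx x, dotProduct_add, hwμ, hQ x, add_sub_cancel_left, abs_mul,
      abs_of_pos hr, hu]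
    rw [mul_comm r |x i₀|, show z * (σ * r) = (σ * z) * r by ring,
      mul_le_mul_iff_of_pos_right hr, abs_le]
  -- the density transforms nicely
  have hsq : ∀ v : EuclideanSpace ℝ (Fin N),
      ∑ i, (WithLp.equiv 2 (Fin N → ℝ) v i) ^ 2 = ‖v‖ ^ 2 := by
    intro v
    rw [EuclideanSpace.norm_eq, Real.sq_sqrt (by positivity)]
    simp [sq_abs]
  have hDF : ∀ x : Fin N → ℝ,
      ENNReal.ofReal ((2 * Real.pi * σ ^ 2) ^ (-(N : ℝ) / 2) *
          Real.exp (- (∑ i, (Feq x i - μ i) ^ 2) / (2 * σ ^ 2)))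
      = ENNReal.ofReal ((2 * Real.pi * σ ^ 2) ^ (-(N : ℝ) / 2) *
          Real.exp (- (∑ i, (x i) ^ 2) / (2 * σ ^ 2))) := by
    intro x
    congr 3
    have h1 : ∀ i, Feq x i - μ i
        = WithLp.equiv 2 (Fin N → ℝ) (Q ((WithLp.equiv 2 (Fin N → ℝ)).symm x)) i := by
      intro i
      rw [hFx x]
      simp
    simp_rw [h1]
    rw [hsq, Q.norm_map, ← hsq ((WithLp.equiv 2 (Fin N → ℝ)).symm x)]
    rfl
  -- put it all together
  rw [gaussianPi, hS, withDensity_apply _ hSm,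
    ← hF.setLIntegral_comp_preimage_emb Feq.measurableEmbedding, hpre]
  calc (∫⁻ x in {x : Fin N → ℝ | x i₀ ∈ Set.Icc (-(σ * z)) (σ * z)},
        ENNReal.ofReal ((2 * Real.pi * σ ^ 2) ^ (-(N : ℝ) / 2) *
          Real.exp (- (∑ i, (Feq x i - μ i) ^ 2) / (2 * σ ^ 2))))
      = (∫⁻ x in {x : Fin N → ℝ | x i₀ ∈ Set.Icc (-(σ * z)) (σ * z)},
        ENNReal.ofReal ((2 * Real.pi * σ ^ 2) ^ (-(N : ℝ) / 2) *
          Real.exp (- (∑ i, (x i) ^ 2) / (2 * σ ^ 2)))) := by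
        exact lintegral_congr fun x => hDF x
    _ = gaussianReal 0 (NNReal.mk (σ ^ 2) (sq_nonneg σ)) (Set.Icc (-(σ * z)) (σ * z)) :=
        gaussianPi_cylinder N hN σ hσ _ _
    _ = gaussianReal 0 1 (Set.Icc (-z) z) := gaussianReal_scale σ z hσ
end
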